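/- Let F, G : ℕ → ℂ be semimultiplicative functions, neither identically zero, and let a_F and a_G be the smallest positive integers k with F(k) ≠ 0 and G(k) ≠ 0, respectively. Then a_F·a_G is the smallest positive integer k with (F ∘ G)(k) ≠ 0, and (F ∘ G)(a_F·a_G) = F(a_F)·G(a_G)·ξ(a_F·a_G)/(ξ(a_F)·ξ(a_G)). -/

import Mathlib

/-- `ξ(n) = ∏_p ν_p(n)!`. -/
def xi (n : ℕ) : ℕ := ∏ p ∈ n.primeFactors, Nat.factorial (n.factorization p)

/-- `∏_p C(ν_p(n), ν_p(d))`. -/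
def binomCoeff (n d : ℕ) : ℕ :=
  ∏ p ∈ n.primeFactors, Nat.choose (n.factorization p) (d.factorization p)

/-- The binomial convolution. -/
noncomputable def bconv (f g : ℕ → ℂ) (n : ℕ) : ℂ :=
  ∑ d ∈ n.divisors, (binomCoeff n d : ℂ) * f d * g (n / d)

/-- Semimultiplicative arithmetical function. -/
def IsSemiMult (F : ℕ → ℂ) : Prop :=
  ∀ m n : ℕ, 0 < m → 0 < n → F m * F n = F (Nat.gcd m n) * F (Nat.lcm m n)

lemma xi_pos (n : ℕ) : 0 < xi n :=
  Finset.prod_pos fun _ _ => Nat.factorial_pos _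

lemma support_dvd (F : ℕ → ℂ) (hF : IsSemiMult F) (a : ℕ) (ha : 0 < a)
    (ha1 : F a ≠ 0) (ha2 : ∀ k, 0 < k → k < a → F k = 0) :
    ∀ n, 0 < n → F n ≠ 0 → a ∣ n := by
  intro n hn hFn
  have h := hF a n ha hn
  have hg : F (Nat.gcd a n) ≠ 0 := by
    intro h0
    rw [h0, zero_mul] at h
    exact mul_ne_zero ha1 hFn h
  have hgpos : 0 < Nat.gcd a n := Nat.gcd_pos_of_pos_left n ha
  by_contra hdvd
  have hlt : Nat.gcd a n < a := by
    rcases lt_or_eq_of_le (Nat.le_of_dvd ha (Nat.gcd_dvd_left a n)) with h' | h'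
    · exact h'
    · exact absurd (h' ▸ Nat.gcd_dvd_right a n) hdvd
  exact hg (ha2 _ hgpos hlt)

lemma xi_extend (a m : ℕ) (h : a.primeFactors ⊆ m.primeFactors) :
    xi a = ∏ p ∈ m.primeFactors, Nat.factorial (a.factorization p) := by
  rw [xi]
  apply Finset.prod_subset h
  intro p _ hp
  have h0 : a.factorization p = 0 := by
    rwa [← Nat.support_factorization, Finsupp.notMem_support_iff] at hp
  simp [h0]

lemma xi_mul_eq (a b : ℕ) (ha : a ≠ 0) (hb : b ≠ 0) :
    xi (a * b) = binomCoeff (a * b) a * (xi a * xi b) := by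
  have hpf : (a * b).primeFactors = a.primeFactors ∪ b.primeFactors :=
    Nat.primeFactors_mul ha hb
  have hmulf : ∀ p, (a * b).factorization p = a.factorization p + b.factorization p := by
    intro p; rw [Nat.factorization_mul ha hb]; simp
  have h1 : xi a = ∏ p ∈ (a * b).primeFactors, Nat.factorial (a.factorization p) :=
    xi_extend a (a * b) (by rw [hpf]; exact Finset.subset_union_left)
  have h2 : xi b = ∏ p ∈ (a * b).primeFactors, Nat.factorial (b.factorization p) :=
    xi_extend b (a * b) (by rw [hpf]; exact Finset.subset_union_right)
  rw [xi, binomCoeff, h1, h2, ← Finset.prod_mul_distrib, ← Finset.prod_mul_distrib]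
  apply Finset.prod_congr rfl
  intro p _
  rw [hmulf p]
  have := Nat.choose_mul_factorial_mul_factorial
    (Nat.le_add_right (a.factorization p) (b.factorization p))
  rw [Nat.add_sub_cancel_left] at this
  rw [← this]; ring

theorem bconv_semimultiplicative_aF_cF (F G : ℕ → ℂ)
    (hF : IsSemiMult F) (hG : IsSemiMult G) (aF aG : ℕ)
    (haF : 0 < aF) (haF1 : F aF ≠ 0) (haF2 : ∀ k : ℕ, 0 < k → k < aF → F k = 0)
    (haG : 0 < aG) (haG1 : G aG ≠ 0) (haG2 : ∀ k : ℕ, 0 < k → k < aG → G k = 0) :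
    (bconv F G (aF * aG) ≠ 0 ∧
      ∀ k : ℕ, 0 < k → k < aF * aG → bconv F G k = 0) ∧
    bconv F G (aF * aG) =
      F aF * G aG * (xi (aF * aG) : ℂ) / ((xi aF : ℂ) * (xi aG : ℂ)) := by
  have hnpos : 0 < aF * aG := Nat.mul_pos haF haG
  have hFd := support_dvd F hF aF haF haF1 haF2
  have hGd := support_dvd G hG aG haG haG1 haG2
  have hzero : ∀ k, 0 < k → k < aF * aG → bconv F G k = 0 := by
    intro k hk hkn
    apply Finset.sum_eq_zero
    intro d hd
    rw [Nat.mem_divisors] at hd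
    have hdpos : 0 < d := Nat.pos_of_dvd_of_pos hd.1 hk
    have hqpos : 0 < k / d := Nat.div_pos (Nat.le_of_dvd hk hd.1) hdpos
    by_cases h1 : F d = 0
    · simp [h1]
    by_cases h2 : G (k / d) = 0
    · simp [h2]
    exfalso
    have hdvd : aF * aG ∣ k := by
      have := mul_dvd_mul (hFd d hdpos h1) (hGd _ hqpos h2)
      rwa [Nat.mul_div_cancel' hd.1] at this
    exact absurd (Nat.le_of_dvd hk hdvd) (not_le.mpr hkn)
  have hval : bconv F G (aF * aG) = (binomCoeff (aF * aG) aF : ℂ) * F aF * G aG := by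
    rw [bconv, Finset.sum_eq_single aF]
    · rw [Nat.mul_div_cancel_left aG haF]
    · intro d hd hne
      rw [Nat.mem_divisors] at hd
      have hdpos : 0 < d := Nat.pos_of_dvd_of_pos hd.1 hnpos
      have hqpos : 0 < aF * aG / d := Nat.div_pos (Nat.le_of_dvd hnpos hd.1) hdpos
      by_cases h1 : F d = 0
      · simp [h1]
      by_cases h2 : G (aF * aG / d) = 0
      · simp [h2]
      exfalso; apply hne
      obtain ⟨s, hs⟩ := hFd d hdpos h1
      obtain ⟨t, ht⟩ := hGd _ hqpos h2
      have hdq : d * (aF * aG / d) = aF * aG := Nat.mul_div_cancel' hd.1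
      have hst : aF * aG * (s * t) = aF * aG * 1 := by
        calc aF * aG * (s * t) = (aF * s) * (aG * t) := by ring
        _ = d * (aF * aG / d) := by rw [← hs, ← ht]
        _ = aF * aG := hdq
        _ = aF * aG * 1 := by ring
      have hs1 : s * t = 1 := Nat.eq_of_mul_eq_mul_left hnpos hst
      have : s = 1 := Nat.eq_one_of_mul_eq_one_right hs1
      rw [hs, this, mul_one]
    · intro h
      exact absurd (Nat.mem_divisors.mpr ⟨dvd_mul_right aF aG, hnpos.ne'⟩) h
  have hbpos : 0 < binomCoeff (aF * aG) aF := by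
    apply Finset.prod_pos
    intro p _
    apply Nat.choose_pos
    rw [Nat.factorization_mul haF.ne' haG.ne']
    simp
  have hxi : (xi (aF * aG) : ℂ) =
      (binomCoeff (aF * aG) aF : ℂ) * ((xi aF : ℂ) * (xi aG : ℂ)) := by
    exact_mod_cast congrArg (Nat.cast : ℕ → ℂ) (xi_mul_eq aF aG haF.ne' haG.ne')
  have hxiF : (xi aF : ℂ) ≠ 0 := Nat.cast_ne_zero.mpr (xi_pos aF).ne'
  have hxiG : (xi aG : ℂ) ≠ 0 := Nat.cast_ne_zero.mpr (xi_pos aG).ne'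
  refine ⟨⟨?_, hzero⟩, ?_⟩
  · rw [hval]
    exact mul_ne_zero (mul_ne_zero (Nat.cast_ne_zero.mpr hbpos.ne') haF1) haG1
  · rw [hval, hxi]
    field_simp
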